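/- Let q be odd, p a monic irreducible in A = F_q[T], r ≥ 1, and G = SL_2(F_q) acting on P^1(A/p^r) via reduction mod p^r and fractional linear transformations. Let S_1 = {(u:1) : u ∈ A/p^r \ F_q, (u−e)^2 = 0 for some e ∈ F_q} and S_2 = {(1:v) : 0 ≠ v ∈ A/p^r, v^2 = 0}. Then #S_1 = q(|p|^{⌊r/2⌋} − 1), #S_2 = |p|^{⌊r/2⌋} − 1, every G-orbit contained in S_1 ∪ S_2 has length (q^2−1)/2, and the number of such orbits is 2(|p|^{⌊r/2⌋} − 1)/(q−1). -/

import Mathlib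

open Matrix Polynomial

section P1
variable (R : Type*) [CommRing R]

/-- Unimodular pairs over `R`. -/
def Unimod := {p : R × R // IsCoprime p.1 p.2}

/-- Unit-scaling relation on unimodular pairs. -/
def P1Rel : Unimod R → Unimod R → Prop := fun p q =>
  ∃ u : Rˣ, (u : R) * p.1.1 = q.1.1 ∧ (u : R) * p.1.2 = q.1.2

/-- The projective line over a commutative ring. -/
def P1 := Quot (P1Rel R)

variable {R}

/-- Class of a unimodular pair. -/
def P1.mk (p : R × R) (h : IsCoprime p.1 p.2) : P1 R := Quot.mk _ ⟨p, h⟩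

/-- Fractional-linear action of `SL₂` on unimodular pairs. -/
def actPair (g : SpecialLinearGroup (Fin 2) R) (p : Unimod R) : Unimod R :=
  ⟨((g : Matrix (Fin 2) (Fin 2) R) 0 0 * p.1.1 + (g : Matrix (Fin 2) (Fin 2) R) 0 1 * p.1.2,
    (g : Matrix (Fin 2) (Fin 2) R) 1 0 * p.1.1 + (g : Matrix (Fin 2) (Fin 2) R) 1 1 * p.1.2), by
    obtain ⟨a, b, hab⟩ := p.2
    have hdet : (g : Matrix (Fin 2) (Fin 2) R) 0 0 * (g : Matrix (Fin 2) (Fin 2) R) 1 1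
        - (g : Matrix (Fin 2) (Fin 2) R) 0 1 * (g : Matrix (Fin 2) (Fin 2) R) 1 0 = 1 := by
      have h := g.2
      rwa [Matrix.det_fin_two] at h
    exact ⟨a * (g : Matrix (Fin 2) (Fin 2) R) 1 1 - b * (g : Matrix (Fin 2) (Fin 2) R) 1 0,
      b * (g : Matrix (Fin 2) (Fin 2) R) 0 0 - a * (g : Matrix (Fin 2) (Fin 2) R) 0 1, by
      linear_combination (a * p.1.1 + b * p.1.2) * hdet + hab⟩⟩

/-- Fractional-linear action of `SL₂` on the projective line. -/
def actP1 (g : SpecialLinearGroup (Fin 2) R) : P1 R → P1 R :=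
  Quot.map (actPair g) (by
    rintro ⟨⟨u, v⟩, hc⟩ ⟨⟨u', v'⟩, hc'⟩ ⟨t, h1, h2⟩
    refine ⟨t, ?_, ?_⟩ <;> show (t : R) * _ = _ <;> dsimp [actPair]
    · linear_combination (g : Matrix (Fin 2) (Fin 2) R) 0 0 * h1
        + (g : Matrix (Fin 2) (Fin 2) R) 0 1 * h2
    · linear_combination (g : Matrix (Fin 2) (Fin 2) R) 1 0 * h1
        + (g : Matrix (Fin 2) (Fin 2) R) 1 1 * h2)

lemma actP1_one (z : P1 R) : actP1 (1 : SpecialLinearGroup (Fin 2) R) z = z := by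
  induction z using Quot.ind with
  | _ p =>
    show Quot.mk _ (actPair 1 p) = Quot.mk _ p
    congr 1
    apply Subtype.ext
    apply Prod.ext <;> simp [actPair, Matrix.one_apply]

lemma actP1_mul (g h : SpecialLinearGroup (Fin 2) R) (z : P1 R) :
    actP1 (g * h) z = actP1 g (actP1 h z) := by
  induction z using Quot.ind with
  | _ p =>
    show Quot.mk _ (actPair (g * h) p) = Quot.mk _ (actPair g (actPair h p))
    congr 1
    apply Subtype.ext
    apply Prod.ext <;>
      simp [actPair, Matrix.mul_apply, Fin.sum_univ_two] <;> ring

/-- The map on projective lines induced by a ring homomorphism. -/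
def P1map {S : Type*} [CommRing S] (f : R →+* S) : P1 R → P1 S :=
  Quot.map (fun p => ⟨(f p.1.1, f p.1.2), p.2.map f⟩) (by
    rintro ⟨⟨u, v⟩, hc⟩ ⟨⟨u', v'⟩, hc'⟩ ⟨t, h1, h2⟩
    refine ⟨Units.map (f : R →* S) t, ?_, ?_⟩ <;>
      simp only [Units.coe_map, MonoidHom.coe_coe, ← _root_.map_mul]
    · exact congrArg f h1
    · exact congrArg f h2)

/-- The stabilizer of a point of `P1 R` in a group acting through `SL₂(R)`. -/
def stabSub {G : Type*} [Group G] (φ : G →* SpecialLinearGroup (Fin 2) R) (z : P1 R) :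
    Subgroup G where
  carrier := {g | actP1 (φ g) z = z}
  one_mem' := by simp [actP1_one]
  mul_mem' := by
    intro g h hg hh
    simp only [Set.mem_setOf_eq] at *
    rw [_root_.map_mul, actP1_mul, hh, hg]
  inv_mem' := by
    intro g hg
    simp only [Set.mem_setOf_eq] at *
    conv_lhs => rw [← hg]
    rw [← actP1_mul, ← _root_.map_mul, inv_mul_cancel, _root_.map_one, actP1_one]

end P1

variable {Fq : Type*} [Field Fq] [Fintype Fq]

/-- The embedding of constants `Fq → Fq[T]/(p^r)`. -/
noncomputable def constMap (Fq : Type*) [Field Fq] (m : Polynomial Fq) :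
    Fq →+* Polynomial Fq ⧸ Ideal.span {m} :=
  (Ideal.Quotient.mk (Ideal.span {m})).comp Polynomial.C

/-- The set `S₁` of points `(u : 1)` with `u ∉ Fq` and `(u - e)² = 0` for some `e ∈ Fq`. -/
def S1set (Fq : Type*) [Field Fq] (m : Polynomial Fq) :
    Set (P1 (Polynomial Fq ⧸ Ideal.span {m})) :=
  {z | ∃ u : Polynomial Fq ⧸ Ideal.span {m},
    (¬∃ c : Fq, u = constMap Fq m c) ∧ (∃ e : Fq, (u - constMap Fq m e) ^ 2 = 0) ∧
    z = P1.mk (u, 1) isCoprime_one_right}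

/-- The set `S₂` of points `(1 : v)` with `v ≠ 0` and `v² = 0`. -/
def S2set (Fq : Type*) [Field Fq] (m : Polynomial Fq) :
    Set (P1 (Polynomial Fq ⧸ Ideal.span {m})) :=
  {z | ∃ v : Polynomial Fq ⧸ Ideal.span {m}, v ≠ 0 ∧ v ^ 2 = 0 ∧
    z = P1.mk (1, v) isCoprime_one_left}

section P1Lemmas

open Matrix

variable {R : Type*} [CommRing R]

/-- A unit from a pair of inverse elements. -/
def mkUnit (w w' : R) (h : w * w' = 1) : Rˣ :=
  ⟨w, w', h, by rwa [mul_comm]⟩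

@[simp] lemma mkUnit_val (w w' : R) (h : w * w' = 1) : ((mkUnit w w' h : Rˣ) : R) = w := rfl

lemma P1Rel.equivalence : Equivalence (P1Rel R) := by
  constructor
  · exact fun p => ⟨1, by simp, by simp⟩
  · rintro p q ⟨u, h1, h2⟩
    exact ⟨u⁻¹, by rw [← h1]; simp, by rw [← h2]; simp⟩
  · rintro p q r ⟨u, h1, h2⟩ ⟨t, h3, h4⟩
    exact ⟨t * u, by rw [Units.val_mul, mul_assoc, h1, h3],
      by rw [Units.val_mul, mul_assoc, h2, h4]⟩

lemma P1.mk_eq_mk {p q : R × R} {hp : IsCoprime p.1 p.2} {hq : IsCoprime q.1 q.2} :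
    P1.mk p hp = P1.mk q hq ↔ ∃ u : Rˣ, (u : R) * p.1 = q.1 ∧ (u : R) * p.2 = q.2 := by
  exact (Quot.eq (r := P1Rel R)).trans (Equivalence.eqvGen_iff P1Rel.equivalence)

lemma P1.mk_congr {p q : R × R} (h : p = q) (hp : IsCoprime p.1 p.2) (hq : IsCoprime q.1 q.2) :
    P1.mk p hp = P1.mk q hq := by subst h; rfl

lemma P1.mk_right_inj {u u' : R} {h : IsCoprime u (1:R)} {h' : IsCoprime u' (1:R)} :
    P1.mk (u, 1) h = P1.mk (u', 1) h' ↔ u = u' := by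
  rw [P1.mk_eq_mk]
  constructor
  · rintro ⟨t, h1, h2⟩
    simp only [mul_one] at h1 h2
    rw [← h1, h2, one_mul]
  · rintro rfl
    exact ⟨1, by simp, by simp⟩

lemma P1.mk_left_inj {v v' : R} {h : IsCoprime (1:R) v} {h' : IsCoprime (1:R) v'} :
    P1.mk (1, v) h = P1.mk (1, v') h' ↔ v = v' := by
  rw [P1.mk_eq_mk]
  constructor
  · rintro ⟨t, h1, h2⟩
    simp only [mul_one] at h1 h2
    rw [← h2, h1, one_mul]
  · rintro rfl
    exact ⟨1, by simp, by simp⟩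

lemma P1.mk_ne_of_nilp {v u : R} (hv2 : v ^ 2 = 0) (hv : v ≠ 0)
    {h : IsCoprime (1:R) v} {h' : IsCoprime u (1:R)} :
    P1.mk (1, v) h ≠ P1.mk (u, 1) h' := by
  rw [Ne, P1.mk_eq_mk]
  rintro ⟨t, h1, h2⟩
  simp only at h1 h2
  apply hv
  calc v = v * ((t : R) * v) := by rw [h2, mul_one]
  _ = (t : R) * v ^ 2 := by ring
  _ = 0 := by rw [hv2, mul_zero]

lemma act_mk (g : SpecialLinearGroup (Fin 2) R) (x y : R) (h : IsCoprime x y) :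
    actP1 g (P1.mk (x, y) h) =
      P1.mk ((g : Matrix (Fin 2) (Fin 2) R) 0 0 * x + (g : Matrix (Fin 2) (Fin 2) R) 0 1 * y,
        (g : Matrix (Fin 2) (Fin 2) R) 1 0 * x + (g : Matrix (Fin 2) (Fin 2) R) 1 1 * y)
      (actPair g ⟨(x, y), h⟩).2 := rfl

end P1Lemmas
section Counting

variable {Fq : Type*} [Field Fq] [Fintype Fq]

lemma finite_polyQuot (f : Polynomial Fq) (hf : f ≠ 0) :
    Finite (Polynomial Fq ⧸ Ideal.span {f}) := by
  haveI : Module.Finite Fq (AdjoinRoot f) := PowerBasis.finite (AdjoinRoot.powerBasis hf)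
  exact Module.finite_of_finite Fq (M := AdjoinRoot f)

lemma card_polyQuot (f : Polynomial Fq) (hf : f ≠ 0) :
    Nat.card (Polynomial Fq ⧸ Ideal.span {f}) = Fintype.card Fq ^ f.natDegree := by
  haveI : Module.Finite Fq (AdjoinRoot f) := PowerBasis.finite (AdjoinRoot.powerBasis hf)
  haveI : Finite (AdjoinRoot f) := Module.finite_of_finite Fq (M := AdjoinRoot f)
  haveI : Fintype (AdjoinRoot f) := Fintype.ofFinite _
  have h1 : Fintype.card (AdjoinRoot f) = Fintype.card Fq ^ Module.finrank Fq (AdjoinRoot f) :=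
    Module.card_eq_pow_finrank
  rw [(AdjoinRoot.powerBasis hf).finrank, AdjoinRoot.powerBasis_dim] at h1
  show Nat.card (AdjoinRoot f) = _
  rw [Nat.card_eq_fintype_card]
  exact h1

lemma pow_dvd_of_sq_dvd (p : Polynomial Fq) (hp : Prime p) :
    ∀ (r : ℕ) (g : Polynomial Fq), p ^ r ∣ g ^ 2 → p ^ (r - r / 2) ∣ g := by
  intro r
  induction r using Nat.strong_induction_on with
  | _ r ih =>
    intro g hdvd
    match r, hdvd with
    | 0, hdvd => simpa using dvd_refl g
    | 1, hdvd =>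
      rw [pow_one] at hdvd
      simpa using hp.dvd_of_dvd_pow hdvd
    | (n+2), hdvd =>
      have hpg : p ∣ g := hp.dvd_of_dvd_pow (dvd_trans (dvd_pow_self p (by omega)) hdvd)
      obtain ⟨g1, rfl⟩ := hpg
      have h2 : p ^ 2 * p ^ n ∣ p ^ 2 * g1 ^ 2 := by
        have : p ^ (n + 2) = p ^ 2 * p ^ n := by ring
        rw [← this]
        calc p ^ (n+2) ∣ (p * g1)^2 := hdvd
        _ = p ^ 2 * g1 ^ 2 := by ring
      have h3 : p ^ n ∣ g1 ^ 2 :=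
        (mul_dvd_mul_iff_left (pow_ne_zero 2 hp.ne_zero)).mp h2
      have h4 := ih n (by omega) g1 h3
      have : p ^ (n + 2 - (n + 2) / 2) = p * p ^ (n - n / 2) := by
        rw [← pow_succ']
        congr 1
        omega
      rw [this]
      exact mul_dvd_mul_left p h4

lemma card_sqzero (p : Polynomial Fq) (hp : Irreducible p) (r : ℕ) :
    Nat.card {v : Polynomial Fq ⧸ Ideal.span {p ^ r} // v ^ 2 = 0} =
      Fintype.card Fq ^ (p.natDegree * (r / 2)) := by
  classical
  set t := r / 2 with ht
  set s := r - r / 2 with hs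
  have hp0 : p ≠ 0 := hp.ne_zero
  -- the multiplication-by-p^s linear map
  set I : Ideal (Polynomial Fq) := Ideal.span {p ^ r} with hI
  set J : Ideal (Polynomial Fq) := Ideal.span {p ^ t} with hJ
  set L : Polynomial Fq →ₗ[Polynomial Fq] (Polynomial Fq ⧸ I) :=
    I.mkQ ∘ₗ LinearMap.mulLeft (Polynomial Fq) (p ^ s) with hL
  have hLapp : ∀ f : Polynomial Fq, L f = Ideal.Quotient.mk I (p ^ s * f) := fun f => rfl
  have hker : LinearMap.ker L = J := by
    ext f
    simp only [LinearMap.mem_ker, hLapp]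
    rw [show (Ideal.Quotient.mk I (p ^ s * f) = 0) ↔ p ^ s * f ∈ I from
      Submodule.Quotient.mk_eq_zero I, hI, hJ, Ideal.mem_span_singleton,
      Ideal.mem_span_singleton]
    constructor
    · intro h
      have : p ^ s * p ^ t ∣ p ^ s * f := by
        rw [← pow_add]
        have : s + t = r := by omega
        rw [this]; exact h
      exact (mul_dvd_mul_iff_left (pow_ne_zero s hp0)).mp this
    · intro h
      have : p ^ s * p ^ t ∣ p ^ s * f := mul_dvd_mul_left _ h
      rwa [← pow_add, show s + t = r from by omega] at this
  set φ : (Polynomial Fq ⧸ J) →ₗ[Polynomial Fq] (Polynomial Fq ⧸ I) :=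
    Submodule.liftQ J L (le_of_eq hker.symm) with hφ
  have hφinj : Function.Injective φ := by
    rw [← LinearMap.ker_eq_bot]
    exact Submodule.ker_liftQ_eq_bot J L _ (le_of_eq hker)
  have hφapp : ∀ f : Polynomial Fq, φ (Ideal.Quotient.mk J f) = Ideal.Quotient.mk I (p ^ s * f) :=
    fun f => rfl
  have hrange : Set.range φ = {v : Polynomial Fq ⧸ I | v ^ 2 = 0} := by
    ext v
    constructor
    · rintro ⟨x, rfl⟩
      obtain ⟨f, rfl⟩ := Submodule.Quotient.mk_surjective J x
      show (φ (Ideal.Quotient.mk J f)) ^ 2 = 0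
      rw [hφapp, ← map_pow]
      rw [show ((Ideal.Quotient.mk I ((p ^ s * f) ^ 2) = 0) ↔ (p^s*f)^2 ∈ I) from
        Submodule.Quotient.mk_eq_zero I, hI, Ideal.mem_span_singleton]
      have h2s : r ≤ s + s := by omega
      calc p ^ r ∣ p ^ (s + s) := pow_dvd_pow p h2s
      _ ∣ (p ^ s * f) ^ 2 := ⟨f ^ 2, by ring⟩
    · intro hv
      obtain ⟨g, rfl⟩ := Ideal.Quotient.mk_surjective (I := I) v
      have hv2 : ((Ideal.Quotient.mk I) g) ^ 2 = 0 := hv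
      have : g ^ 2 ∈ I := by
        rw [← map_pow] at hv2
        exact (Submodule.Quotient.mk_eq_zero I).mp hv2
      rw [hI, Ideal.mem_span_singleton] at this
      obtain ⟨f, hf⟩ := (pow_dvd_of_sq_dvd p hp.prime r g this)
      exact ⟨Ideal.Quotient.mk J f, by rw [hφapp, ← hf]⟩
  have e1 : (Polynomial Fq ⧸ J) ≃ {v : Polynomial Fq ⧸ I // v ^ 2 = 0} :=
    (Equiv.ofInjective φ hφinj).trans (Equiv.setCongr hrange)
  rw [← Nat.card_congr e1, hJ, card_polyQuot _ (pow_ne_zero t hp0), natDegree_pow, mul_comm]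

end Counting
section ConstMap

variable {Fq : Type*} [Field Fq] [Fintype Fq]

lemma constMap_injective (m : Polynomial Fq) (hm : ¬IsUnit m) :
    Function.Injective (constMap Fq m) := by
  haveI : Nontrivial (Polynomial Fq ⧸ Ideal.span {m}) :=
    Ideal.Quotient.nontrivial_iff.mpr (Ideal.span_singleton_ne_top hm)
  exact (constMap Fq m).injective

lemma const_eq_zero (m : Polynomial Fq) (hm : ¬IsUnit m) {c : Fq} {n : ℕ} (hn : n ≠ 0)
    (h : constMap Fq m c ^ n = 0) : c = 0 := by
  have h1 : constMap Fq m (c ^ n) = constMap Fq m 0 := by rw [map_pow, map_zero, h]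
  exact pow_eq_zero_iff hn |>.mp (constMap_injective m hm h1)

lemma const_unique (m : Polynomial Fq) (hm : ¬IsUnit m) {u : Polynomial Fq ⧸ Ideal.span {m}}
    {e e' : Fq} (h : (u - constMap Fq m e) ^ 2 = 0) (h' : (u - constMap Fq m e') ^ 2 = 0) :
    e = e' := by
  have key : constMap Fq m (e' - e) ^ 3 = 0 := by
    rw [map_sub]
    linear_combination ((u - constMap Fq m e) - 3 * (u - constMap Fq m e')) * h +
      (3 * (u - constMap Fq m e) - (u - constMap Fq m e')) * h'
  have h0 : e' - e = 0 := const_eq_zero m hm (by norm_num : (3:ℕ) ≠ 0) key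
  exact (sub_eq_zero.mp h0).symm

lemma scalar_cancel (m : Polynomial Fq) {v : Polynomial Fq ⧸ Ideal.span {m}} (hv : v ≠ 0)
    {s s' : Fq} (h : constMap Fq m s * v = constMap Fq m s' * v) : s = s' := by
  by_contra hne
  apply hv
  calc v = constMap Fq m ((s - s')⁻¹ * (s - s')) * v := by
        rw [inv_mul_cancel₀ (sub_ne_zero.mpr hne), _root_.map_one, one_mul]
  _ = constMap Fq m ((s - s')⁻¹) * (constMap Fq m s * v - constMap Fq m s' * v) := by
        rw [_root_.map_mul, map_sub]; ring
  _ = 0 := by rw [h, sub_self, mul_zero]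

lemma smul_ne_zero' (m : Polynomial Fq) {v : Polynomial Fq ⧸ Ideal.span {m}} (hv : v ≠ 0)
    {s : Fq} (hs : s ≠ 0) : constMap Fq m s * v ≠ 0 := by
  intro h
  exact hs (scalar_cancel m hv (by rw [h, map_zero, zero_mul]))

lemma shift_eq (m : Polynomial Fq) (hm : ¬IsUnit m) {v w : Polynomial Fq ⧸ Ideal.span {m}}
    {e e' : Fq} (hv : v ^ 2 = 0) (hw : w ^ 2 = 0)
    (h : constMap Fq m e + v = constMap Fq m e' + w) : e = e' ∧ v = w := by
  have h1 : ((constMap Fq m e + v) - constMap Fq m e) ^ 2 = 0 := by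
    rw [add_sub_cancel_left]; exact hv
  have h2 : ((constMap Fq m e + v) - constMap Fq m e') ^ 2 = 0 := by
    rw [h, add_sub_cancel_left]; exact hw
  have hee : e = e' := const_unique m hm h1 h2
  refine ⟨hee, ?_⟩
  rw [hee] at h
  exact add_left_cancel h

end ConstMap

section Squares

variable {Fq : Type*} [Field Fq] [Fintype Fq]

/-- The set of nonzero squares in `Fq`. -/
def SqS (Fq : Type*) [Field Fq] : Set Fq := {x | ∃ a, a ≠ 0 ∧ a * a = x}

lemma SqS.one_mem : (1 : Fq) ∈ SqS Fq := ⟨1, one_ne_zero, mul_one 1⟩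

lemma SqS.ne_zero {x : Fq} (hx : x ∈ SqS Fq) : x ≠ 0 := by
  obtain ⟨a, ha, rfl⟩ := hx
  exact mul_ne_zero ha ha

lemma SqS.mul_mem {x y : Fq} (hx : x ∈ SqS Fq) (hy : y ∈ SqS Fq) : x * y ∈ SqS Fq := by
  obtain ⟨a, ha, rfl⟩ := hx
  obtain ⟨b, hb, rfl⟩ := hy
  exact ⟨a * b, mul_ne_zero ha hb, by ring⟩

lemma SqS.inv_mem {x : Fq} (hx : x ∈ SqS Fq) : x⁻¹ ∈ SqS Fq := by
  obtain ⟨a, ha, rfl⟩ := hx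
  exact ⟨a⁻¹, inv_ne_zero ha, by rw [mul_inv]⟩

lemma two_ne_zero_of_odd (hq : Odd (Fintype.card Fq)) : (2 : Fq) ≠ 0 := by
  have : ringChar Fq ≠ 2 := fun hc => by
    have h1 := FiniteField.even_card_iff_char_two.mp hc
    rw [Nat.odd_iff] at hq
    omega
  exact Ring.two_ne_zero this

lemma two_mul_card_SqS (hq : Odd (Fintype.card Fq)) :
    Nat.card (SqS Fq) * 2 = Fintype.card Fq - 1 := by
  classical
  have h2 : (2 : Fq) ≠ 0 := two_ne_zero_of_odd hq
  set F : {a : Fq // a ≠ 0} → ↥(SqS Fq) := fun a => ⟨a.1 * a.1, a.1, a.2, rfl⟩ with hF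
  have key : ∀ x : ↥(SqS Fq), Nonempty ({a : {a : Fq // a ≠ 0} // F a = x} ≃ Bool) := by
    intro x
    obtain ⟨a0, ha0, hsq⟩ := x.2
    have hane : -a0 ≠ a0 := fun hcon => by
      have h4 : (2 : Fq) * a0 = 0 := by linear_combination -hcon
      exact ha0 ((mul_eq_zero.mp h4).resolve_left h2)
    have hmk : ∀ (b : Fq) (hb : b ≠ 0), b * b = x.1 → F ⟨b, hb⟩ = x :=
      fun b hb hbx => Subtype.ext hbx
    refine ⟨(Equiv.ofBijective (fun b : Bool => match b with
      | false => (⟨⟨a0, ha0⟩, hmk a0 ha0 hsq⟩ : {a : {a : Fq // a ≠ 0} // F a = x})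
      | true => ⟨⟨-a0, neg_ne_zero.mpr ha0⟩,
          hmk _ (neg_ne_zero.mpr ha0) (by rw [neg_mul_neg]; exact hsq)⟩) ⟨?_, ?_⟩).symm⟩
    · intro b b' hbb
      cases b <;> cases b' <;> first
      | rfl
      | exact absurd (congrArg (fun z => z.1.1) hbb).symm hane
      | exact absurd (congrArg (fun z => z.1.1) hbb) hane
    · rintro ⟨⟨a, ha⟩, hFa⟩
      have hval : a * a = a0 * a0 := by
        have h5 := congrArg Subtype.val hFa
        simp only [hF] at h5
        rw [h5, ← hsq]
      have h6 : (a - a0) * (a + a0) = 0 := by linear_combination hval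
      rcases mul_eq_zero.mp h6 with h | h
      · exact ⟨false, Subtype.ext (Subtype.ext (show a0 = a by linear_combination -h))⟩
      · exact ⟨true, Subtype.ext (Subtype.ext (show -a0 = a by linear_combination -h))⟩
  let E : {a : Fq // a ≠ 0} ≃ (↥(SqS Fq)) × Bool :=
    ((Equiv.sigmaFiberEquiv F).symm.trans
      (Equiv.sigmaCongrRight fun x => (key x).some)).trans
      (Equiv.sigmaEquivProd _ _)
  have hcard : Nat.card {a : Fq // a ≠ 0} = Fintype.card Fq - 1 := by
    rw [← Nat.card_congr unitsEquivNeZero, Nat.card_eq_fintype_card, Fintype.card_units]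
  rw [← hcard, Nat.card_congr E, Nat.card_prod, Nat.card_eq_fintype_card (α := Bool),
    Fintype.card_bool]

end Squares
section Orbits

open Matrix

variable {Fq : Type*} [Field Fq] [Fintype Fq]

/-- The candidate orbit attached to a square-zero element `v`. -/
def orbSet (m : Polynomial Fq) (v : Polynomial Fq ⧸ Ideal.span {m}) :
    Set (P1 (Polynomial Fq ⧸ Ideal.span {m})) :=
  {z | (∃ s ∈ SqS Fq, z = P1.mk (1, constMap Fq m s * v) isCoprime_one_left) ∨
    (∃ e : Fq, ∃ s ∈ SqS Fq,
      z = P1.mk (constMap Fq m e - constMap Fq m s * v, 1) isCoprime_one_right)}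

lemma mem_orbSet {m : Polynomial Fq} {v : Polynomial Fq ⧸ Ideal.span {m}}
    {z : P1 (Polynomial Fq ⧸ Ideal.span {m})} :
    z ∈ orbSet m v ↔
      ((∃ s ∈ SqS Fq, z = P1.mk (1, constMap Fq m s * v) isCoprime_one_left) ∨
      (∃ e : Fq, ∃ s ∈ SqS Fq,
        z = P1.mk (constMap Fq m e - constMap Fq m s * v, 1) isCoprime_one_right)) := Iff.rfl

lemma SL2_map_entry (m : Polynomial Fq) (g : SpecialLinearGroup (Fin 2) Fq) (i j : Fin 2) :
    ((SpecialLinearGroup.map (constMap Fq m) g :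
      SpecialLinearGroup (Fin 2) (Polynomial Fq ⧸ Ideal.span {m})) :
      Matrix (Fin 2) (Fin 2) (Polynomial Fq ⧸ Ideal.span {m})) i j =
      constMap Fq m ((g : Matrix (Fin 2) (Fin 2) Fq) i j) := by
  rw [SpecialLinearGroup.map_apply_coe, RingHom.mapMatrix_apply, Matrix.map_apply]

lemma range_act_S2 (m : Polynomial Fq) {v : Polynomial Fq ⧸ Ideal.span {m}} (hv2 : v ^ 2 = 0) :
    Set.range (fun g : SpecialLinearGroup (Fin 2) Fq =>
      actP1 (SpecialLinearGroup.map (constMap Fq m) g) (P1.mk (1, v) isCoprime_one_left))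
    = orbSet m v := by
  ext z
  constructor
  · rintro ⟨g, rfl⟩
    dsimp only
    obtain ⟨a, b, c, d, ha, hb, hcc, hd⟩ :
        ∃ a b c d : Fq, (g : Matrix (Fin 2) (Fin 2) Fq) 0 0 = a ∧
          (g : Matrix (Fin 2) (Fin 2) Fq) 0 1 = b ∧ (g : Matrix (Fin 2) (Fin 2) Fq) 1 0 = c ∧
          (g : Matrix (Fin 2) (Fin 2) Fq) 1 1 = d := ⟨_, _, _, _, rfl, rfl, rfl, rfl⟩
    have hdetf : a * d - b * c = 1 := by
      have h := g.2
      rw [Matrix.det_fin_two] at h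
      rw [ha, hb, hcc, hd] at h
      exact h
    rw [act_mk, mem_orbSet]
    by_cases hc : c = 0
    · have hd0 : d ≠ 0 := fun h0 => by rw [hc, h0] at hdetf; simp at hdetf
      have hAD : constMap Fq m a * constMap Fq m d = 1 := by
        rw [← _root_.map_mul, show a * d = 1 by linear_combination hdetf + b * hc,
          _root_.map_one]
      have hC : constMap Fq m c = 0 := by rw [hc, map_zero]
      refine Or.inl ⟨d * d, ⟨d, hd0, rfl⟩, ?_⟩
      apply P1.mk_eq_mk.mpr
      refine ⟨mkUnit
        (constMap Fq m d - constMap Fq m d * constMap Fq m d * constMap Fq m b * v)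
        (constMap Fq m a + constMap Fq m b * v)
        (by linear_combination (1 - constMap Fq m d * constMap Fq m b * v) * hAD
          - (constMap Fq m d)^2 * (constMap Fq m b)^2 * hv2), ?_, ?_⟩ <;>
        simp only [mkUnit_val, SL2_map_entry, ha, hb, hcc, hd, _root_.map_mul]
      · linear_combination (1 - constMap Fq m d * constMap Fq m b * v) * hAD
          - (constMap Fq m d)^2 * (constMap Fq m b)^2 * hv2
      · linear_combination
          (constMap Fq m d - constMap Fq m d * constMap Fq m d * constMap Fq m b * v) * hC
          - (constMap Fq m d)^3 * constMap Fq m b * hv2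
    · have hdetR : constMap Fq m a * constMap Fq m d - constMap Fq m b * constMap Fq m c = 1 := by
        rw [← _root_.map_mul, ← _root_.map_mul, ← map_sub, hdetf, _root_.map_one]
      have hCCi : constMap Fq m c * constMap Fq m c⁻¹ = 1 := by
        rw [← _root_.map_mul, mul_inv_cancel₀ hc, _root_.map_one]
      refine Or.inr ⟨a * c⁻¹, c⁻¹ * c⁻¹, ⟨c⁻¹, inv_ne_zero hc, rfl⟩, ?_⟩
      apply P1.mk_eq_mk.mpr
      refine ⟨mkUnit
        (constMap Fq m c⁻¹ - constMap Fq m d * constMap Fq m c⁻¹ * constMap Fq m c⁻¹ * v)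
        (constMap Fq m c + constMap Fq m d * v)
        (by linear_combination (1 - constMap Fq m d * constMap Fq m c⁻¹ * v) * hCCi
          - (constMap Fq m d)^2 * (constMap Fq m c⁻¹)^2 * hv2), ?_, ?_⟩ <;>
        simp only [mkUnit_val, SL2_map_entry, ha, hb, hcc, hd, _root_.map_mul]
      · linear_combination (-(constMap Fq m c⁻¹)^2 * v) * hdetR
          + (-(constMap Fq m b) * constMap Fq m c⁻¹ * v) * hCCi
          - constMap Fq m b * constMap Fq m d * (constMap Fq m c⁻¹)^2 * hv2
      · linear_combination (1 - constMap Fq m d * constMap Fq m c⁻¹ * v) * hCCi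
          - (constMap Fq m d)^2 * (constMap Fq m c⁻¹)^2 * hv2
  · rw [mem_orbSet]
    rintro (⟨s, ⟨x, hx, rfl⟩, rfl⟩ | ⟨e, s, ⟨x, hx, rfl⟩, rfl⟩)
    · refine ⟨⟨!![x⁻¹, 0; 0, x], by rw [Matrix.det_fin_two_of]; field_simp; simp⟩, ?_⟩
      dsimp only
      have hAAi : constMap Fq m x * constMap Fq m x⁻¹ = 1 := by
        rw [← _root_.map_mul, mul_inv_cancel₀ hx, _root_.map_one]
      rw [act_mk]
      apply P1.mk_eq_mk.mpr
      refine ⟨mkUnit (constMap Fq m x) (constMap Fq m x⁻¹) hAAi, ?_, ?_⟩ <;>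
        (repeat erw [SL2_map_entry]) <;>
        simp only [mkUnit_val, SL2_map_entry, Matrix.cons_val', Matrix.cons_val_zero,
          Matrix.cons_val_one, Matrix.head_cons, Matrix.head_fin_const, Matrix.empty_val',
          Matrix.cons_val_fin_one, Matrix.of_apply, _root_.map_mul, map_zero, _root_.map_one]
      · linear_combination hAAi
      · ring
    · refine ⟨⟨!![e * x⁻¹, -x; x⁻¹, 0], by rw [Matrix.det_fin_two_of]; field_simp; simp⟩, ?_⟩
      dsimp only
      have hAAi : constMap Fq m x * constMap Fq m x⁻¹ = 1 := by
        rw [← _root_.map_mul, mul_inv_cancel₀ hx, _root_.map_one]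
      rw [act_mk]
      apply P1.mk_eq_mk.mpr
      refine ⟨mkUnit (constMap Fq m x) (constMap Fq m x⁻¹) hAAi, ?_, ?_⟩ <;>
        (repeat erw [SL2_map_entry]) <;>
        simp only [mkUnit_val, SL2_map_entry, Matrix.cons_val', Matrix.cons_val_zero,
          Matrix.cons_val_one, Matrix.head_cons, Matrix.head_fin_const, Matrix.empty_val',
          Matrix.cons_val_fin_one, Matrix.of_apply, _root_.map_mul, map_zero, _root_.map_one,
          map_neg]
      · linear_combination constMap Fq m e * hAAi
      · linear_combination hAAi

lemma range_act_S1 (m : Polynomial Fq) {v : Polynomial Fq ⧸ Ideal.span {m}} (hv2 : v ^ 2 = 0)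
    (e₀ : Fq) :
    Set.range (fun g : SpecialLinearGroup (Fin 2) Fq =>
      actP1 (SpecialLinearGroup.map (constMap Fq m) g)
        (P1.mk (constMap Fq m e₀ + v, 1) isCoprime_one_right))
    = orbSet m (-v) := by
  ext z
  constructor
  · rintro ⟨g, rfl⟩
    dsimp only
    obtain ⟨a, b, c, d, ha, hb, hcc, hd⟩ :
        ∃ a b c d : Fq, (g : Matrix (Fin 2) (Fin 2) Fq) 0 0 = a ∧
          (g : Matrix (Fin 2) (Fin 2) Fq) 0 1 = b ∧ (g : Matrix (Fin 2) (Fin 2) Fq) 1 0 = c ∧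
          (g : Matrix (Fin 2) (Fin 2) Fq) 1 1 = d := ⟨_, _, _, _, rfl, rfl, rfl, rfl⟩
    have hdetf : a * d - b * c = 1 := by
      have h := g.2
      rw [Matrix.det_fin_two] at h
      rw [ha, hb, hcc, hd] at h
      exact h
    have hdetR : constMap Fq m a * constMap Fq m d - constMap Fq m b * constMap Fq m c = 1 := by
      rw [← _root_.map_mul, ← _root_.map_mul, ← map_sub, hdetf, _root_.map_one]
    rw [act_mk, mem_orbSet]
    by_cases hα : c * e₀ + d = 0
    · have hc0 : c ≠ 0 := by
        intro h0
        have hd0 : d = 0 := by rw [h0] at hα; simpa using hα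
        rw [h0, hd0] at hdetf; simp at hdetf
      have hD : constMap Fq m d = -(constMap Fq m c * constMap Fq m e₀) := by
        rw [show d = -(c * e₀) by linear_combination hα, map_neg, _root_.map_mul]
      refine Or.inl ⟨c * c, ⟨c, hc0, rfl⟩, ?_⟩
      apply P1.mk_eq_mk.mpr
      refine ⟨mkUnit
        (-constMap Fq m c - constMap Fq m a * constMap Fq m c * constMap Fq m c * v)
        (constMap Fq m a * (constMap Fq m e₀ + v) + constMap Fq m b)
        (by linear_combination (1 + constMap Fq m a * constMap Fq m c * v) * hdetR
          + (-(constMap Fq m a) - (constMap Fq m a)^2 * constMap Fq m c * v) * hD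
          - (constMap Fq m a)^2 * (constMap Fq m c)^2 * hv2), ?_, ?_⟩ <;>
        simp only [mkUnit_val, SL2_map_entry, ha, hb, hcc, hd, _root_.map_mul]
      · linear_combination (1 + constMap Fq m a * constMap Fq m c * v) * hdetR
          + (-(constMap Fq m a) - (constMap Fq m a)^2 * constMap Fq m c * v) * hD
          - (constMap Fq m a)^2 * (constMap Fq m c)^2 * hv2
      · linear_combination (-(constMap Fq m c) - constMap Fq m a * (constMap Fq m c)^2 * v) * hD
          - constMap Fq m a * (constMap Fq m c)^3 * hv2
    · have hAA : (constMap Fq m c * constMap Fq m e₀ + constMap Fq m d) *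
          constMap Fq m (c * e₀ + d)⁻¹ = 1 := by
        rw [show constMap Fq m c * constMap Fq m e₀ + constMap Fq m d
            = constMap Fq m (c * e₀ + d) by rw [map_add, _root_.map_mul],
          ← _root_.map_mul, mul_inv_cancel₀ hα, _root_.map_one]
      refine Or.inr ⟨(a * e₀ + b) * (c * e₀ + d)⁻¹,
        (c * e₀ + d)⁻¹ * (c * e₀ + d)⁻¹, ⟨(c * e₀ + d)⁻¹, inv_ne_zero hα, rfl⟩, ?_⟩
      apply P1.mk_eq_mk.mpr
      refine ⟨mkUnit
        (constMap Fq m (c * e₀ + d)⁻¹ -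
          constMap Fq m c * constMap Fq m (c * e₀ + d)⁻¹ * constMap Fq m (c * e₀ + d)⁻¹ * v)
        (constMap Fq m c * (constMap Fq m e₀ + v) + constMap Fq m d)
        (by linear_combination (1 - constMap Fq m c * constMap Fq m (c * e₀ + d)⁻¹ * v) * hAA
          - (constMap Fq m c)^2 * (constMap Fq m (c * e₀ + d)⁻¹)^2 * hv2), ?_, ?_⟩ <;>
        simp only [mkUnit_val, SL2_map_entry, ha, hb, hcc, hd, _root_.map_mul, map_add]
      · linear_combination (constMap Fq m (c * e₀ + d)⁻¹)^2 * v * hdetR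
          + (-(constMap Fq m a) * constMap Fq m (c * e₀ + d)⁻¹ * v) * hAA
          - constMap Fq m a * constMap Fq m c * (constMap Fq m (c * e₀ + d)⁻¹)^2 * hv2
      · linear_combination (1 - constMap Fq m c * constMap Fq m (c * e₀ + d)⁻¹ * v) * hAA
          - (constMap Fq m c)^2 * (constMap Fq m (c * e₀ + d)⁻¹)^2 * hv2
  · rw [mem_orbSet]
    rintro (⟨s, ⟨x, hx, rfl⟩, rfl⟩ | ⟨e, s, ⟨x, hx, rfl⟩, rfl⟩)
    · refine ⟨⟨!![0, -x⁻¹; x, -(x * e₀)], by rw [Matrix.det_fin_two_of]; field_simp; simp⟩, ?_⟩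
      dsimp only
      have hAAi : constMap Fq m x * constMap Fq m x⁻¹ = 1 := by
        rw [← _root_.map_mul, mul_inv_cancel₀ hx, _root_.map_one]
      rw [act_mk]
      apply P1.mk_eq_mk.mpr
      refine ⟨mkUnit (-constMap Fq m x) (-constMap Fq m x⁻¹) (by linear_combination hAAi),
        ?_, ?_⟩ <;>
        (repeat erw [SL2_map_entry]) <;>
        simp only [mkUnit_val, SL2_map_entry, Matrix.cons_val', Matrix.cons_val_zero,
          Matrix.cons_val_one, Matrix.head_cons, Matrix.head_fin_const, Matrix.empty_val',
          Matrix.cons_val_fin_one, Matrix.of_apply, _root_.map_mul, map_zero, _root_.map_one,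
          map_neg]
      · linear_combination hAAi
      · ring
    · refine ⟨⟨!![x, e * x⁻¹ - x * e₀; 0, x⁻¹], by rw [Matrix.det_fin_two_of]; field_simp; simp⟩, ?_⟩
      dsimp only
      have hAAi : constMap Fq m x * constMap Fq m x⁻¹ = 1 := by
        rw [← _root_.map_mul, mul_inv_cancel₀ hx, _root_.map_one]
      rw [act_mk]
      apply P1.mk_eq_mk.mpr
      refine ⟨mkUnit (constMap Fq m x) (constMap Fq m x⁻¹) hAAi, ?_, ?_⟩ <;>
        (repeat erw [SL2_map_entry]) <;>
        simp only [mkUnit_val, SL2_map_entry, Matrix.cons_val', Matrix.cons_val_zero,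
          Matrix.cons_val_one, Matrix.head_cons, Matrix.head_fin_const, Matrix.empty_val',
          Matrix.cons_val_fin_one, Matrix.of_apply, _root_.map_mul, map_zero, _root_.map_one,
          map_neg, map_sub]
      · linear_combination constMap Fq m e * hAAi
      · linear_combination hAAi

end Orbits
section Glue

open Matrix

variable {Fq : Type*} [Field Fq] [Fintype Fq]

lemma card_orbSet (m : Polynomial Fq) (hm : ¬IsUnit m)
    {v : Polynomial Fq ⧸ Ideal.span {m}} (hv0 : v ≠ 0) (hv2 : v ^ 2 = 0) :
    Nat.card (orbSet m v) = Nat.card (SqS Fq) + Fintype.card Fq * Nat.card (SqS Fq) := by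
  have hsv : ∀ s : Fq, (constMap Fq m s * v) ^ 2 = 0 := fun s => by
    rw [mul_pow, hv2, mul_zero]
  have hbij : Function.Bijective (fun w : (↥(SqS Fq) ⊕ (Fq × ↥(SqS Fq))) =>
      match w with
      | Sum.inl s => (⟨P1.mk (1, constMap Fq m s.1 * v) isCoprime_one_left,
          Or.inl ⟨s.1, s.2, rfl⟩⟩ : ↥(orbSet m v))
      | Sum.inr (e, s) =>
          ⟨P1.mk (constMap Fq m e - constMap Fq m s.1 * v, 1) isCoprime_one_right,
          Or.inr ⟨e, s.1, s.2, rfl⟩⟩) := by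
    constructor
    · rintro (s | ⟨e, s⟩) (s' | ⟨e', s'⟩) h
      · have h1 := P1.mk_left_inj.mp (congrArg Subtype.val h)
        exact congrArg Sum.inl (Subtype.ext (scalar_cancel m hv0 h1))
      · exact absurd (congrArg Subtype.val h)
          (P1.mk_ne_of_nilp (hsv s.1) (smul_ne_zero' m hv0 (SqS.ne_zero s.2)))
      · exact absurd (congrArg Subtype.val h).symm
          (P1.mk_ne_of_nilp (hsv s'.1) (smul_ne_zero' m hv0 (SqS.ne_zero s'.2)))
      · have h1 := P1.mk_right_inj.mp (congrArg Subtype.val h)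
        have h2 : constMap Fq m e + -(constMap Fq m s.1 * v)
            = constMap Fq m e' + -(constMap Fq m s'.1 * v) := by linear_combination h1
        obtain ⟨hee, hvv⟩ := shift_eq m hm (by linear_combination hsv s.1)
          (by linear_combination hsv s'.1) h2
        have hss : s.1 = s'.1 := scalar_cancel m hv0 (neg_inj.mp hvv)
        exact congrArg Sum.inr (Prod.ext hee (Subtype.ext hss))
    · rintro ⟨z, ⟨s, hs, rfl⟩ | ⟨e, s, hs, rfl⟩⟩
      · exact ⟨Sum.inl ⟨s, hs⟩, rfl⟩
      · exact ⟨Sum.inr (e, ⟨s, hs⟩), rfl⟩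
  rw [← Nat.card_eq_of_bijective _ hbij, Nat.card_sum, Nat.card_prod,
    Nat.card_eq_fintype_card (α := Fq)]

lemma card_S2 (m : Polynomial Fq) :
    Nat.card (S2set Fq m) =
      Nat.card {v : Polynomial Fq ⧸ Ideal.span {m} // v ≠ 0 ∧ v ^ 2 = 0} := by
  refine (Nat.card_eq_of_bijective (fun w : {v : Polynomial Fq ⧸ Ideal.span {m} // v ≠ 0 ∧ v ^ 2 = 0} =>
    (⟨P1.mk (1, w.1) isCoprime_one_left, ⟨w.1, w.2.1, w.2.2, rfl⟩⟩ : ↥(S2set Fq m)))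
    ⟨?_, ?_⟩).symm
  · intro w w' h
    exact Subtype.ext (P1.mk_left_inj.mp (congrArg Subtype.val h))
  · rintro ⟨z, v, hv0, hv2, rfl⟩
    exact ⟨⟨v, hv0, hv2⟩, rfl⟩

lemma const_not_sqzero (m : Polynomial Fq) (hm : ¬IsUnit m) {c : Fq}
    (h2 : (constMap Fq m c) ^ 2 = 0) : constMap Fq m c = 0 := by
  rw [const_eq_zero m hm (by norm_num : (2:ℕ) ≠ 0) h2, map_zero]

lemma card_S1 (m : Polynomial Fq) (hm : ¬IsUnit m) :
    Nat.card (S1set Fq m) =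
      Nat.card (Fq × {v : Polynomial Fq ⧸ Ideal.span {m} // v ≠ 0 ∧ v ^ 2 = 0}) := by
  refine (Nat.card_eq_of_bijective
    (fun w : Fq × {v : Polynomial Fq ⧸ Ideal.span {m} // v ≠ 0 ∧ v ^ 2 = 0} =>
    (⟨P1.mk (constMap Fq m w.1 + w.2.1, 1) isCoprime_one_right,
      ⟨constMap Fq m w.1 + w.2.1,
        by
          rintro ⟨c, hc⟩
          have hvc : w.2.1 = constMap Fq m (c - w.1) := by
            rw [map_sub]; linear_combination hc
          have h0 : constMap Fq m (c - w.1) = 0 :=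
            const_not_sqzero m hm (by rw [← hvc]; exact w.2.2.2)
          exact w.2.2.1 (by rw [hvc, h0]),
        ⟨w.1, by rw [add_sub_cancel_left]; exact w.2.2.2⟩, rfl⟩⟩ : ↥(S1set Fq m)))
    ⟨?_, ?_⟩).symm
  · intro w w' h
    have h1 := P1.mk_right_inj.mp (congrArg Subtype.val h)
    obtain ⟨hee, hvv⟩ := shift_eq m hm w.2.2.2 w'.2.2.2 h1
    exact Prod.ext hee (Subtype.ext hvv)
  · rintro ⟨z, u, hnc, ⟨e, he⟩, rfl⟩
    refine ⟨(e, ⟨u - constMap Fq m e, fun h0 => hnc ⟨e, sub_eq_zero.mp h0⟩, he⟩), ?_⟩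
    exact Subtype.ext (P1.mk_congr (by rw [Prod.mk.injEq]; exact ⟨by ring, rfl⟩) _ _)

lemma card_V0 (m : Polynomial Fq) (hfin : Finite (Polynomial Fq ⧸ Ideal.span {m})) :
    Nat.card {v : Polynomial Fq ⧸ Ideal.span {m} // v ≠ 0 ∧ v ^ 2 = 0} =
      Nat.card {v : Polynomial Fq ⧸ Ideal.span {m} // v ^ 2 = 0} - 1 := by
  have h0 : (0 : Polynomial Fq ⧸ Ideal.span {m}) ∈ {v : Polynomial Fq ⧸ Ideal.span {m} | v ^ 2 = 0} :=
    zero_pow (by norm_num)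
  have e1 : Nat.card {v : Polynomial Fq ⧸ Ideal.span {m} // v ≠ 0 ∧ v ^ 2 = 0}
      = (({v : Polynomial Fq ⧸ Ideal.span {m} | v ^ 2 = 0} \ {0}) : Set _).ncard := by
    rw [← Nat.card_coe_set_eq]
    exact Nat.card_congr (Equiv.subtypeEquivRight fun v =>
      ⟨fun h => ⟨h.2, h.1⟩, fun h => ⟨h.2, h.1⟩⟩)
  rw [e1, Set.ncard_diff_singleton_of_mem h0, ← Nat.card_coe_set_eq]
  exact congrArg (· - 1) (Nat.card_congr (Equiv.subtypeEquivRight fun v => Iff.rfl))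

/-- The setoid on square-zero elements given by multiplication by nonzero squares. -/
def sqSetoid (m : Polynomial Fq) :
    Setoid {v : Polynomial Fq ⧸ Ideal.span {m} // v ≠ 0 ∧ v ^ 2 = 0} where
  r w w' := ∃ s ∈ SqS Fq, constMap Fq m s * w.1 = w'.1
  iseqv := by
    constructor
    · exact fun w => ⟨1, SqS.one_mem, by rw [_root_.map_one, one_mul]⟩
    · rintro w w' ⟨s, hs, hsw⟩
      refine ⟨s⁻¹, SqS.inv_mem hs, ?_⟩
      rw [← hsw, ← mul_assoc, ← _root_.map_mul, inv_mul_cancel₀ (SqS.ne_zero hs),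
        _root_.map_one, one_mul]
    · rintro w w' w'' ⟨s, hs, hsw⟩ ⟨s', hs', hsw'⟩
      refine ⟨s' * s, SqS.mul_mem hs' hs, ?_⟩
      rw [_root_.map_mul, mul_assoc, hsw, hsw']

lemma card_V0_eq_quot (m : Polynomial Fq) :
    Nat.card {v : Polynomial Fq ⧸ Ideal.span {m} // v ≠ 0 ∧ v ^ 2 = 0} =
      Nat.card (Quotient (sqSetoid m)) * Nat.card (SqS Fq) := by
  classical
  have key : ∀ c : Quotient (sqSetoid m),
      Nonempty ({w : {v : Polynomial Fq ⧸ Ideal.span {m} // v ≠ 0 ∧ v ^ 2 = 0} //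
        Quotient.mk (sqSetoid m) w = c} ≃ ↥(SqS Fq)) := by
    intro c
    refine ⟨(Equiv.ofBijective (fun s : ↥(SqS Fq) =>
      ⟨⟨constMap Fq m s.1 * c.out.1,
        smul_ne_zero' m c.out.2.1 (SqS.ne_zero s.2),
        by rw [mul_pow, c.out.2.2, mul_zero]⟩,
        (@Quotient.sound _ (sqSetoid m) _ _
          ((sqSetoid m).iseqv.symm ⟨s.1, s.2, rfl⟩)).trans (Quotient.out_eq c)⟩) ⟨?_, ?_⟩).symm⟩
    · intro s s' h
      have h1 := congrArg (fun z => z.1.1) h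
      exact Subtype.ext (scalar_cancel m c.out.2.1 h1)
    · rintro ⟨w, hw⟩
      obtain ⟨s, hs, hsv⟩ := Quotient.exact ((Quotient.out_eq c).trans hw.symm)
      exact ⟨⟨s, hs⟩, Subtype.ext (Subtype.ext hsv)⟩
  rw [Nat.card_congr ((Equiv.sigmaFiberEquiv (Quotient.mk (sqSetoid m))).symm.trans
    ((Equiv.sigmaCongrRight fun c => (key c).some).trans (Equiv.sigmaEquivProd _ _))),
    Nat.card_prod]

/-- The square-zero element attached to a point of `S1set`. -/
noncomputable def s1V (m : Polynomial Fq) {z : P1 (Polynomial Fq ⧸ Ideal.span {m})}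
    (h : z ∈ S1set Fq m) : Polynomial Fq ⧸ Ideal.span {m} :=
  h.choose - constMap Fq m h.choose_spec.2.1.choose

lemma s1V_ne (m : Polynomial Fq) {z : P1 (Polynomial Fq ⧸ Ideal.span {m})}
    (h : z ∈ S1set Fq m) : s1V m h ≠ 0 :=
  fun h0 => h.choose_spec.1 ⟨h.choose_spec.2.1.choose, sub_eq_zero.mp h0⟩

lemma s1V_sq (m : Polynomial Fq) {z : P1 (Polynomial Fq ⧸ Ideal.span {m})}
    (h : z ∈ S1set Fq m) : (s1V m h) ^ 2 = 0 :=
  h.choose_spec.2.1.choose_spec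

lemma s1V_eq (m : Polynomial Fq) {z : P1 (Polynomial Fq ⧸ Ideal.span {m})}
    (h : z ∈ S1set Fq m) :
    z = P1.mk (constMap Fq m h.choose_spec.2.1.choose + s1V m h, 1) isCoprime_one_right := by
  exact h.choose_spec.2.2.trans
    (P1.mk_congr (by rw [Prod.mk.injEq]; exact ⟨by rw [s1V]; ring, rfl⟩) _ _)

/-- The invariant of a point of `S1 ∪ S2`. -/
noncomputable def invQ (m : Polynomial Fq) (z : ↥(S1set Fq m ∪ S2set Fq m)) :
    Quotient (sqSetoid m) :=
  @dite _ (z.1 ∈ S2set Fq m) (Classical.dec _)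
    (fun h => Quotient.mk (sqSetoid m) ⟨h.choose, h.choose_spec.1, h.choose_spec.2.1⟩)
    (fun h => Quotient.mk (sqSetoid m) ⟨-(s1V m (Or.resolve_right z.2 h)),
      neg_ne_zero.mpr (s1V_ne m _), by linear_combination s1V_sq m (Or.resolve_right z.2 h)⟩)

lemma invQ_S2 (m : Polynomial Fq) (z : ↥(S1set Fq m ∪ S2set Fq m))
    {v : Polynomial Fq ⧸ Ideal.span {m}} (hv0 : v ≠ 0) (hv2 : v ^ 2 = 0)
    (hz : z.1 = P1.mk (1, v) isCoprime_one_left) :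
    invQ m z = Quotient.mk (sqSetoid m) ⟨v, hv0, hv2⟩ := by
  have hmem : z.1 ∈ S2set Fq m := ⟨v, hv0, hv2, hz⟩
  rw [invQ, dif_pos hmem]
  congr 1
  apply Subtype.ext
  have hspec := hmem.choose_spec.2.2
  exact (P1.mk_left_inj.mp (hz.symm.trans hspec)).symm

lemma invQ_S1 (m : Polynomial Fq) (hm : ¬IsUnit m) (z : ↥(S1set Fq m ∪ S2set Fq m))
    {v : Polynomial Fq ⧸ Ideal.span {m}} {e : Fq} (hv0 : v ≠ 0) (hv2 : v ^ 2 = 0)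
    (hz : z.1 = P1.mk (constMap Fq m e + v, 1) isCoprime_one_right) :
    invQ m z = Quotient.mk (sqSetoid m)
      ⟨-v, neg_ne_zero.mpr hv0, by linear_combination hv2⟩ := by
  have hnmem : z.1 ∉ S2set Fq m := by
    rintro ⟨v', hv'0, hv'2, heq⟩
    rw [hz] at heq
    exact P1.mk_ne_of_nilp hv'2 hv'0 heq.symm
  rw [invQ, dif_neg hnmem]
  congr 1
  apply Subtype.ext
  show -(s1V m _) = -v
  rw [neg_inj]
  have h1 := s1V_eq m (Or.resolve_right z.2 hnmem)
  have h2 := P1.mk_right_inj.mp (hz.symm.trans h1)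
  exact (shift_eq m hm hv2 (s1V_sq m _) h2).2.symm
end Glue
section Final

open Matrix

variable {Fq : Type*} [Field Fq] [Fintype Fq]

lemma canon (m : Polynomial Fq) (z : ↥(S1set Fq m ∪ S2set Fq m)) :
    (∃ v, v ≠ 0 ∧ v ^ 2 = 0 ∧ z.1 = P1.mk (1, v) isCoprime_one_left) ∨
    (∃ (e : Fq) (v : Polynomial Fq ⧸ Ideal.span {m}), v ≠ 0 ∧ v ^ 2 = 0 ∧
      z.1 = P1.mk (constMap Fq m e + v, 1) isCoprime_one_right) := by
  rcases z.2 with h | h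
  · exact Or.inr ⟨h.choose_spec.2.1.choose, s1V m h, s1V_ne m h, s1V_sq m h, s1V_eq m h⟩
  · obtain ⟨v, h0, h2, heq⟩ := h
    exact Or.inl ⟨v, h0, h2, heq⟩

lemma key_orbit (m : Polynomial Fq) (hm : ¬IsUnit m) (z : ↥(S1set Fq m ∪ S2set Fq m)) :
    ∃ u : {v : Polynomial Fq ⧸ Ideal.span {m} // v ≠ 0 ∧ v ^ 2 = 0},
      invQ m z = Quotient.mk (sqSetoid m) u ∧
      Set.range (fun g : SpecialLinearGroup (Fin 2) Fq =>
        actP1 (SpecialLinearGroup.map (constMap Fq m) g) z.1) = orbSet m u.1 := by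
  rcases canon m z with ⟨v, h0, h2, heq⟩ | ⟨e, v, h0, h2, heq⟩
  · exact ⟨⟨v, h0, h2⟩, invQ_S2 m z h0 h2 heq, by rw [heq]; exact range_act_S2 m h2⟩
  · exact ⟨⟨-v, neg_ne_zero.mpr h0, by linear_combination h2⟩, invQ_S1 m hm z h0 h2 heq,
      by rw [heq]; exact range_act_S1 m h2 e⟩

lemma mem_inv (m : Polynomial Fq) (hm : ¬IsUnit m) (w : ↥(S1set Fq m ∪ S2set Fq m))
    (u : {v : Polynomial Fq ⧸ Ideal.span {m} // v ≠ 0 ∧ v ^ 2 = 0})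
    (hw : w.1 ∈ orbSet m u.1) : invQ m w = Quotient.mk (sqSetoid m) u := by
  have hsq : ∀ s : Fq, (constMap Fq m s * u.1) ^ 2 = 0 := fun s => by
    rw [mul_pow, u.2.2, mul_zero]
  rcases canon m w with ⟨v, h0, h2, heq⟩ | ⟨e, v, h0, h2, heq⟩
  · rw [invQ_S2 m w h0 h2 heq]
    rcases mem_orbSet.mp hw with ⟨s, hs, heq2⟩ | ⟨e', s, hs, heq2⟩
    · have hv : constMap Fq m s * u.1 = v :=
        (P1.mk_left_inj.mp (heq.symm.trans heq2)).symm
      exact (@Quotient.sound _ (sqSetoid m) _ _ (⟨s, hs, hv⟩ :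
        (sqSetoid m).r u ⟨v, h0, h2⟩)).symm
    · exact absurd (heq.symm.trans heq2) (P1.mk_ne_of_nilp h2 h0)
  · rw [invQ_S1 m hm w h0 h2 heq]
    rcases mem_orbSet.mp hw with ⟨s, hs, heq2⟩ | ⟨e', s, hs, heq2⟩
    · exact absurd (heq.symm.trans heq2).symm
        (P1.mk_ne_of_nilp (hsq s) (smul_ne_zero' m u.2.1 (SqS.ne_zero hs)))
    · have h3 := P1.mk_right_inj.mp (heq.symm.trans heq2)
      have h4 : constMap Fq m e + v = constMap Fq m e' + -(constMap Fq m s * u.1) := by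
        linear_combination h3
      have h5 := shift_eq m hm h2 (by linear_combination hsq s) h4
      refine (@Quotient.sound _ (sqSetoid m) _ _ (⟨s, hs, ?_⟩ :
        (sqSetoid m).r u ⟨-v, neg_ne_zero.mpr h0, by linear_combination h2⟩)).symm
      show constMap Fq m s * u.1 = -v
      rw [h5.2, neg_neg]

lemma rel_iff (m : Polynomial Fq) (hm : ¬IsUnit m) (z w : ↥(S1set Fq m ∪ S2set Fq m)) :
    (∃ g : SpecialLinearGroup (Fin 2) Fq,
      actP1 (SpecialLinearGroup.map (constMap Fq m) g) z.1 = w.1) ↔ invQ m z = invQ m w := by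
  obtain ⟨u, hiz, hrz⟩ := key_orbit m hm z
  obtain ⟨u', hiw, hrw⟩ := key_orbit m hm w
  constructor
  · rintro ⟨g, hg⟩
    have hmem : w.1 ∈ orbSet m u.1 := by rw [← hrz]; exact ⟨g, hg⟩
    rw [mem_inv m hm w u hmem, hiz]
  · intro h
    rw [hiz, hiw] at h
    obtain ⟨s, hs, hsu⟩ := Quotient.exact h
    have hw_self : w.1 ∈ orbSet m u'.1 := by
      rw [← hrw]
      exact ⟨1, by dsimp only; rw [_root_.map_one, actP1_one]⟩
    have hsub : orbSet m u'.1 ⊆ orbSet m u.1 := by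
      intro y hy
      rcases mem_orbSet.mp hy with ⟨s', hs', rfl⟩ | ⟨e, s', hs', rfl⟩
      · refine Or.inl ⟨s' * s, SqS.mul_mem hs' hs, P1.mk_congr ?_ _ _⟩
        rw [Prod.mk.injEq]
        refine ⟨rfl, ?_⟩
        rw [_root_.map_mul]
        linear_combination (-(constMap Fq m s')) * hsu
      · refine Or.inr ⟨e, s' * s, SqS.mul_mem hs' hs, P1.mk_congr ?_ _ _⟩
        rw [Prod.mk.injEq]
        refine ⟨?_, rfl⟩
        rw [_root_.map_mul]
        linear_combination (constMap Fq m s') * hsu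
    have := hsub hw_self
    rw [← hrz] at this
    exact this

lemma card_quot_rel (m : Polynomial Fq) (hm : ¬IsUnit m) :
    Nat.card (Quot (fun z w : ↥(S1set Fq m ∪ S2set Fq m) =>
      ∃ g : SpecialLinearGroup (Fin 2) Fq,
        actP1 (SpecialLinearGroup.map (constMap Fq m) g) z.1 = w.1)) =
    Nat.card (Quotient (sqSetoid m)) := by
  apply Nat.card_eq_of_bijective (Quot.lift (invQ m) (fun z w hzw => (rel_iff m hm z w).mp hzw))
  constructor
  · intro x y
    induction x using Quot.ind with | _ z =>
    induction y using Quot.ind with | _ w =>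
    intro h
    exact Quot.sound ((rel_iff m hm z w).mpr h)
  · intro c
    obtain ⟨u, hu⟩ := Quotient.exists_rep c
    refine ⟨Quot.mk _ ⟨P1.mk (1, u.1) isCoprime_one_left, Or.inr ⟨u.1, u.2.1, u.2.2, rfl⟩⟩, ?_⟩
    rw [← hu]
    exact invQ_S2 m _ u.2.1 u.2.2 rfl

end Final
/-- Cardinalities of `S₁`, `S₂`, and the structure of the
`SL₂(Fq)`-orbits contained in `S₁ ∪ S₂`. -/
theorem S1_S2_orbits (p : Polynomial Fq) (hp : Irreducible p) (hmon : p.Monic)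
    (r : ℕ) (hr : 1 ≤ r) (hq : Odd (Fintype.card Fq)) :
    Nat.card (S1set Fq (p ^ r)) =
      Fintype.card Fq * ((Fintype.card Fq) ^ (p.natDegree * (r / 2)) - 1) ∧
    Nat.card (S2set Fq (p ^ r)) = (Fintype.card Fq) ^ (p.natDegree * (r / 2)) - 1 ∧
    (∀ z ∈ S1set Fq (p ^ r) ∪ S2set Fq (p ^ r),
      Nat.card {w : P1 (Polynomial Fq ⧸ Ideal.span {p ^ r}) |
          ∃ g : SpecialLinearGroup (Fin 2) Fq,
            actP1 (SpecialLinearGroup.map (constMap Fq (p ^ r)) g) z = w} =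
        ((Fintype.card Fq) ^ 2 - 1) / 2) ∧
    Nat.card (Quot (fun z w : ↥(S1set Fq (p ^ r) ∪ S2set Fq (p ^ r)) =>
        ∃ g : SpecialLinearGroup (Fin 2) Fq,
          actP1 (SpecialLinearGroup.map (constMap Fq (p ^ r)) g) z.1 = w.1)) =
      2 * ((Fintype.card Fq) ^ (p.natDegree * (r / 2)) - 1) / (Fintype.card Fq - 1) := by
  have hq2 : 2 ≤ Fintype.card Fq := Fintype.one_lt_card
  have hm0 : p ^ r ≠ 0 := pow_ne_zero _ hp.ne_zero
  have hmu : ¬IsUnit (p ^ r) := fun h => hp.not_isUnit ((isUnit_pow_iff (by omega : r ≠ 0)).mp h)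
  have hfin : Finite (Polynomial Fq ⧸ Ideal.span {p ^ r}) := finite_polyQuot _ hm0
  have hNcard : Nat.card {v : Polynomial Fq ⧸ Ideal.span {p ^ r} // v ^ 2 = 0} =
      Fintype.card Fq ^ (p.natDegree * (r / 2)) := card_sqzero p hp r
  have hV0 : Nat.card {v : Polynomial Fq ⧸ Ideal.span {p ^ r} // v ≠ 0 ∧ v ^ 2 = 0} =
      Fintype.card Fq ^ (p.natDegree * (r / 2)) - 1 := by
    rw [card_V0 _ hfin, hNcard]
  have hSq2 : Nat.card (SqS Fq) * 2 = Fintype.card Fq - 1 := two_mul_card_SqS hq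
  have hk : Fintype.card Fq = 2 * Nat.card (SqS Fq) + 1 := by omega
  refine ⟨?_, ?_, ?_, ?_⟩
  · rw [card_S1 _ hmu, Nat.card_prod, hV0, Nat.card_eq_fintype_card]
  · rw [card_S2, hV0]
  · intro z hz
    obtain ⟨u, _, hrz⟩ := key_orbit (p ^ r) hmu ⟨z, hz⟩
    rw [show {w : P1 (Polynomial Fq ⧸ Ideal.span {p ^ r}) |
          ∃ g : SpecialLinearGroup (Fin 2) Fq,
            actP1 (SpecialLinearGroup.map (constMap Fq (p ^ r)) g) z = w} =
        orbSet (p ^ r) u.1 from hrz]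
    rw [card_orbSet _ hmu u.2.1 u.2.2]
    have h5 : Nat.card (SqS Fq) + Fintype.card Fq * Nat.card (SqS Fq) =
        2 * (Nat.card (SqS Fq) * Nat.card (SqS Fq)) + 2 * Nat.card (SqS Fq) := by
      rw [hk]; ring
    have h6 : Fintype.card Fq ^ 2 =
        4 * (Nat.card (SqS Fq) * Nat.card (SqS Fq)) + 4 * Nat.card (SqS Fq) + 1 := by
      rw [hk]; ring
    rw [h5, h6]
    generalize Nat.card (SqS Fq) * Nat.card (SqS Fq) = K
    omega
  · rw [card_quot_rel _ hmu]
    have h7 := card_V0_eq_quot (p ^ r)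
    rw [hV0] at h7
    rw [h7, show 2 * (Nat.card (Quotient (sqSetoid (p ^ r))) * Nat.card (SqS Fq)) =
        Nat.card (Quotient (sqSetoid (p ^ r))) * (Fintype.card Fq - 1) from by
      rw [← hSq2]; ring]
    rw [Nat.mul_div_cancel _ (by omega : 0 < Fintype.card Fq - 1)]
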